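/- The characteristic polynomial of the matrix M = [[0,0,0,1,0,0],[1,0,1,0,1,1],[0,0,0,0,0,0],[0,1,0,0,0,0],[1,0,0,0,0,0],[0,0,0,0,1,0]] has largest real root equal to the real root α of x³ − x − 1 lying in (1,2); in particular α is an eigenvalue of M and every eigenvalue of M has absolute value at most α. -/

import Mathlib

open Polynomial Matrix in
lemma charpoly_eval_diag {R : Type*} [CommRing R] (x : R) (M : Matrix (Fin 6) (Fin 6) R) :
    M.charpoly.eval x = (Matrix.diagonal (fun _ => x) - M).det := by
  rw [Matrix.charpoly, ← Polynomial.coe_evalRingHom, RingHom.map_det, RingHom.mapMatrix_apply]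
  congr 1
  rw [Polynomial.coe_evalRingHom, charmatrix, Matrix.map_sub (Polynomial.eval x) (fun a b => by simp)]
  congr 1
  · rw [Matrix.scalar_apply, Matrix.diagonal_map (by simp)]
    simp
  · ext i j; simp

set_option maxRecDepth 20000 in
set_option maxHeartbeats 2000000 in
open Polynomial Matrix in
lemma charpoly_eval_key {R : Type*} [CommRing R] (x : R) :
    ((!![0,0,0,1,0,0; 1,0,1,0,1,1; 0,0,0,0,0,0; 0,1,0,0,0,0; 1,0,0,0,0,0; 0,0,0,0,1,0] :
      Matrix (Fin 6) (Fin 6) R)).charpoly.eval x = x^6 - x^3 - x^2 - x := by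
  rw [charpoly_eval_diag]
  simp [Matrix.det_succ_row_zero, Fin.sum_univ_succ, Matrix.diagonal_apply, Fin.succAbove]
  ring

def Mmpds : Matrix (Fin 6) (Fin 6) ℝ :=
  !![0,0,0,1,0,0; 1,0,1,0,1,1; 0,0,0,0,0,0; 0,1,0,0,0,0; 1,0,0,0,0,0; 0,0,0,0,1,0]

open Polynomial in
lemma Mmpds_charpoly : Mmpds.charpoly = X^6 - X^3 - X^2 - X := by
  apply Polynomial.funext
  intro x
  rw [show Mmpds = !![0,0,0,1,0,0; 1,0,1,0,1,1; 0,0,0,0,0,0; 0,1,0,0,0,0; 1,0,0,0,0,0; 0,0,0,0,1,0] from rfl,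
    charpoly_eval_key]
  simp

open Polynomial in
lemma Mmpds_charpolyC : (Mmpds.map ((↑) : ℝ → ℂ)).charpoly = X^6 - X^3 - X^2 - X := by
  have h : Mmpds.map ((↑) : ℝ → ℂ) = Mmpds.map (algebraMap ℝ ℂ) := rfl
  rw [h, Matrix.charpoly_map, Mmpds_charpoly]
  simp

theorem stmt_9 (α : ℝ) (hα1 : 1 < α) (hα2 : α < 2) (hroot : α ^ 3 = α + 1) :
    Mmpds.charpoly.IsRoot α ∧
    (∀ x : ℝ, Mmpds.charpoly.IsRoot x → x ≤ α) ∧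
    (∀ z : ℂ, (Mmpds.map ((↑) : ℝ → ℂ)).charpoly.IsRoot z → ‖z‖ ≤ α) := by
  refine ⟨?_, ?_, ?_⟩
  · rw [Polynomial.IsRoot, Mmpds_charpoly]
    simp only [Polynomial.eval_sub, Polynomial.eval_pow, Polynomial.eval_X]
    nlinarith [hroot, sq_nonneg α]
  · intro x hx
    rw [Polynomial.IsRoot, Mmpds_charpoly] at hx
    simp only [Polynomial.eval_sub, Polynomial.eval_pow, Polynomial.eval_X] at hx
    have hfac : x * ((x^2+1) * (x^3-x-1)) = 0 := by linear_combination hx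
    rcases mul_eq_zero.mp hfac with h0 | h1
    · linarith [h0 ▸ (by linarith : (0:ℝ) ≤ α)]
    · rcases mul_eq_zero.mp h1 with h2 | h3
      · nlinarith [sq_nonneg x]
      · by_contra hgt
        push_neg at hgt
        have hx1 : 1 < x := lt_trans hα1 hgt
        have hp2 : 0 < x^2 + x*α + α^2 - 1 := by nlinarith
        nlinarith [mul_pos (sub_pos.mpr hgt) hp2]
  · intro z hz
    rw [Polynomial.IsRoot, Mmpds_charpolyC] at hz
    simp only [Polynomial.eval_sub, Polynomial.eval_pow, Polynomial.eval_X] at hz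
    have hfac : z * ((z^2+1) * (z^3-z-1)) = 0 := by linear_combination hz
    rcases mul_eq_zero.mp hfac with h0 | h1
    · simp [h0]; linarith
    · rcases mul_eq_zero.mp h1 with h2 | h3
      · have hz2 : z^2 = -1 := by linear_combination h2
        have habs : ‖z‖ ^ 2 = 1 := by
          rw [← norm_pow, hz2]; simp
        have : ‖z‖ = 1 := by
          nlinarith [norm_nonneg z]
        linarith [this]
      · have hz3 : z^3 = z + 1 := by linear_combination h3
        set t := ‖z‖ with ht
        have ht0 : 0 ≤ t := norm_nonneg _
        have h1' : t^3 ≤ t + 1 := by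
          calc t^3 = ‖z^3‖ := by rw [norm_pow]
          _ = ‖z + 1‖ := by rw [hz3]
          _ ≤ ‖z‖ + ‖(1:ℂ)‖ := norm_add_le _ _
          _ = t + 1 := by simp [ht]
        by_contra hgt
        push_neg at hgt
        have ht1 : 1 < t := lt_trans hα1 hgt
        have hp2 : 0 < t^2 + t*α + α^2 - 1 := by nlinarith
        nlinarith [mul_pos (sub_pos.mpr hgt) hp2]
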